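/- Let δ > 0, let 0 < ε₁ ≤ δ and 0 < ε₂ ≤ δ, and for 0 < ε ≤ δ set U_ε^δ := {(x,y) ∈ ℝ × (0,∞) : |x| ≤ δ/2 and max(2|x|, ε) < y ≤ δ}. Then for all real x₁, x₂, the hyperbolic measure of the symmetric difference of the two translated truncated regions satisfies λ((U_{ε₁}^δ + x₁) Δ (U_{ε₂}^δ + x₂)) ≤ 2·(|x₁ − x₂| + |ε₁ − ε₂|) / min(ε₁, ε₂). -/

import Mathlib

open MeasureTheory

/-- The hyperbolic measure `λ(A) = ∬_A y⁻² dx dy` on the upper half-plane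
`ℍ = {(x,y) : y > 0}`. -/
noncomputable def hypMeasure : Measure (ℝ × ℝ) :=
  (volume.restrict {p : ℝ × ℝ | 0 < p.2}).withDensity fun p => ENNReal.ofReal (1 / p.2 ^ 2)

/-- The horizontal translate `A + t = {(x + t, y) : (x, y) ∈ A}`. -/
def htrans (A : Set (ℝ × ℝ)) (t : ℝ) : Set (ℝ × ℝ) := {p : ℝ × ℝ | (p.1 - t, p.2) ∈ A}

/-- The truncated region
`U_ε^δ := {(x,y) ∈ ℝ × (0,∞) : |x| ≤ δ/2 ∧ max(2|x|, ε) < y ≤ δ}`. -/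
def Utrunc (ε δ : ℝ) : Set (ℝ × ℝ) :=
  {p : ℝ × ℝ | |p.1| ≤ δ / 2 ∧ max (2 * |p.1|) ε < p.2 ∧ p.2 ≤ δ}

lemma measurableSet_htrans_Utrunc (ε δ x : ℝ) : MeasurableSet (htrans (Utrunc ε δ) x) := by
  have hU : MeasurableSet (Utrunc ε δ) := by
    have : Utrunc ε δ = {p : ℝ × ℝ | |p.1| ≤ δ / 2} ∩
        ({p : ℝ × ℝ | max (2 * |p.1|) ε < p.2} ∩ {p : ℝ × ℝ | p.2 ≤ δ}) := by
      ext p; simp [Utrunc, and_assoc]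
    rw [this]
    exact (measurableSet_le (by measurability) measurable_const).inter
      ((measurableSet_lt (by measurability) measurable_snd).inter
        (measurableSet_le measurable_snd measurable_const))
  have h : htrans (Utrunc ε δ) x = (fun p : ℝ × ℝ => (p.1 - x, p.2)) ⁻¹' (Utrunc ε δ) := rfl
  rw [h]
  exact hU.preimage (by measurability)

lemma integral_inv_sq_Ioc {a b : ℝ} (ha : 0 < a) (hab : a ≤ b) :
    ∫ y in Set.Ioc a b, 1 / y ^ 2 = 1 / a - 1 / b := by
  have hcont : ContinuousOn (fun y : ℝ => 1 / y ^ 2) (Set.Icc a b) := by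
    apply ContinuousOn.div continuousOn_const (by fun_prop)
    intro y hy
    exact pow_ne_zero _ (lt_of_lt_of_le ha hy.1).ne'
  have hInt : IntervalIntegrable (fun y : ℝ => 1 / y ^ 2) volume a b :=
    (intervalIntegrable_iff_integrableOn_Ioc_of_le hab).mpr
      (hcont.integrableOn_Icc.mono_set Set.Ioc_subset_Icc_self)
  have hderiv : ∀ y ∈ Set.uIcc a b, HasDerivAt (fun y : ℝ => -y⁻¹) (1 / y ^ 2) y := by
    intro y hy
    rw [Set.uIcc_of_le hab] at hy
    have h0 : y ≠ 0 := (lt_of_lt_of_le ha hy.1).ne'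
    have := (hasDerivAt_inv h0).neg
    rw [one_div, ← neg_neg ((y ^ 2)⁻¹)]
    exact this
  have h := intervalIntegral.integral_eq_sub_of_hasDerivAt hderiv hInt
  rw [intervalIntegral.integral_of_le hab] at h
  rw [h]
  ring

lemma lintegral_inv_sq_Ioc {a b : ℝ} (ha : 0 < a) (hab : a ≤ b) :
    ∫⁻ y in Set.Ioc a b, ENNReal.ofReal (1 / y ^ 2) = ENNReal.ofReal (1 / a - 1 / b) := by
  have hcont : ContinuousOn (fun y : ℝ => 1 / y ^ 2) (Set.Icc a b) := by
    apply ContinuousOn.div continuousOn_const (by fun_prop)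
    intro y hy
    exact pow_ne_zero _ (lt_of_lt_of_le ha hy.1).ne'
  have hInt : IntegrableOn (fun y : ℝ => 1 / y ^ 2) (Set.Ioc a b) :=
    hcont.integrableOn_Icc.mono_set Set.Ioc_subset_Icc_self
  rw [← ofReal_integral_eq_lintegral_ofReal hInt
      (Filter.Eventually.of_forall fun y => by positivity),
    integral_inv_sq_Ioc ha hab]

/-- Key sectioning lemma: if `S` lives in the horizontal strip `a < y ≤ b` and each
horizontal section has length at most `c`, then `λ(S) ≤ c (1/a - 1/b)`. -/
lemma hypMeasure_le_of_section (S : Set (ℝ × ℝ)) (hS : MeasurableSet S)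
    (a b c : ℝ) (ha : 0 < a) (hab : a ≤ b) (hc : 0 ≤ c)
    (hsub : ∀ p : ℝ × ℝ, p ∈ S → a < p.2 ∧ p.2 ≤ b)
    (hsec : ∀ y ∈ Set.Ioc a b, volume {x : ℝ | (x, y) ∈ S} ≤ ENNReal.ofReal c) :
    hypMeasure S ≤ ENNReal.ofReal (c * (1 / a - 1 / b)) := by
  have hf : Measurable fun p : ℝ × ℝ => ENNReal.ofReal (1 / p.2 ^ 2) := by
    apply ENNReal.measurable_ofReal.comp
    exact measurable_const.div (measurable_snd.pow_const 2)
  have hSsub : S ⊆ {p : ℝ × ℝ | 0 < p.2} := fun p hp => ha.trans (hsub p hp).1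
  rw [hypMeasure, withDensity_apply _ hS, Measure.restrict_restrict hS,
    Set.inter_eq_left.mpr hSsub]
  rw [← lintegral_indicator hS, Measure.volume_eq_prod,
    lintegral_prod_symm _ ((hf.indicator hS).aemeasurable)]
  have hsecmeas : ∀ y : ℝ, MeasurableSet {x : ℝ | (x, y) ∈ S} :=
    fun y => hS.preimage (measurable_prodMk_right)
  have step : ∀ y : ℝ,
      (∫⁻ x, S.indicator (fun p : ℝ × ℝ => ENNReal.ofReal (1 / p.2 ^ 2)) (x, y)) =
        ENNReal.ofReal (1 / y ^ 2) * volume {x : ℝ | (x, y) ∈ S} := by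
    intro y
    have heq : (fun x : ℝ => S.indicator (fun p : ℝ × ℝ => ENNReal.ofReal (1 / p.2 ^ 2)) (x, y)) =
        fun x : ℝ => ({x : ℝ | (x, y) ∈ S}).indicator
          (fun _ => ENNReal.ofReal (1 / y ^ 2)) x := by
      funext x
      by_cases hx : (x, y) ∈ S <;> simp [Set.indicator, hx]
    rw [heq, lintegral_indicator_const (hsecmeas y)]
  calc (∫⁻ y, ∫⁻ x, S.indicator (fun p : ℝ × ℝ => ENNReal.ofReal (1 / p.2 ^ 2)) (x, y))
      ≤ ∫⁻ y, (Set.Ioc a b).indicator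
          (fun y => ENNReal.ofReal (1 / y ^ 2) * ENNReal.ofReal c) y := by
        apply lintegral_mono
        intro y
        dsimp only
        rw [step y]
        by_cases hy : y ∈ Set.Ioc a b
        · rw [Set.indicator_of_mem hy]
          exact mul_le_mul_right (hsec y hy) _
        · have hempty : {x : ℝ | (x, y) ∈ S} = ∅ := by
            ext x
            simp only [Set.mem_setOf_eq, Set.mem_empty_iff_false, iff_false]
            intro hx
            exact hy ⟨(hsub _ hx).1, (hsub _ hx).2⟩
          rw [Set.indicator_of_notMem hy, hempty]
          simp
    _ = ENNReal.ofReal c * ∫⁻ y in Set.Ioc a b, ENNReal.ofReal (1 / y ^ 2) := by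
        rw [lintegral_indicator measurableSet_Ioc,
          ← lintegral_const_mul' (ENNReal.ofReal c) _ ENNReal.ofReal_ne_top]
        exact lintegral_congr fun y => mul_comm _ _
    _ = ENNReal.ofReal (c * (1 / a - 1 / b)) := by
        rw [lintegral_inv_sq_Ioc ha hab, ← ENNReal.ofReal_mul hc]

/-- Helper for section inclusions: if `x` is strictly within `y/2` of `u` but at least `y/2`
away from `v`, it lies in one of two intervals of length `|u - v|`. -/
lemma mem_twoIcc {u v x y : ℝ} (h1 : |x - u| < y / 2) (h2 : y / 2 ≤ |x - v|) :
    x ∈ Set.Icc (min u v - y / 2) (max u v - y / 2) ∪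
      Set.Icc (min u v + y / 2) (max u v + y / 2) := by
  rw [abs_lt] at h1
  rcases le_abs.mp h2 with h | h
  · right
    exact ⟨by linarith [min_le_right u v], by linarith [le_max_left u v]⟩
  · left
    exact ⟨by linarith [min_le_left u v], by linarith [le_max_right u v]⟩

/-- For `δ > 0`, `0 < ε₁ ≤ δ`, `0 < ε₂ ≤ δ` and all real `x₁, x₂`, the hyperbolic measure of
the symmetric difference of the two translated truncated regions satisfies
`λ((U_{ε₁}^δ + x₁) Δ (U_{ε₂}^δ + x₂)) ≤ 2·(|x₁ − x₂| + |ε₁ − ε₂|) / min(ε₁, ε₂)`. -/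
theorem hypMeasure_symmDiff_htrans_Utrunc_le (δ ε₁ ε₂ : ℝ) (hδ : 0 < δ)
    (hε₁ : 0 < ε₁) (hε₁δ : ε₁ ≤ δ) (hε₂ : 0 < ε₂) (hε₂δ : ε₂ ≤ δ) (x₁ x₂ : ℝ) :
    hypMeasure (symmDiff (htrans (Utrunc ε₁ δ) x₁) (htrans (Utrunc ε₂ δ) x₂)) ≤
      ENNReal.ofReal (2 * (|x₁ - x₂| + |ε₁ - ε₂|) / min ε₁ ε₂) := by
  set A := htrans (Utrunc ε₁ δ) x₁ with hAdef
  set B := htrans (Utrunc ε₂ δ) x₂ with hBdef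
  set C := htrans (Utrunc ε₂ δ) x₁ with hCdef
  set m := min ε₁ ε₂ with hmdef
  set M := max ε₁ ε₂ with hMdef
  set t := |x₁ - x₂| with htdef
  have hm : 0 < m := lt_min hε₁ hε₂
  have hmM : m ≤ M := min_le_max
  have hM : 0 < M := hm.trans_le hmM
  have hMδ : M ≤ δ := max_le hε₁δ hε₂δ
  have ht : 0 ≤ t := abs_nonneg _
  have hmem : ∀ (ε x : ℝ) (p : ℝ × ℝ), p ∈ htrans (Utrunc ε δ) x ↔
      |p.1 - x| ≤ δ / 2 ∧ max (2 * |p.1 - x|) ε < p.2 ∧ p.2 ≤ δ := by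
    intro ε x p; rfl
  -- Bound for A Δ C
  have hAC : hypMeasure (symmDiff A C) ≤ ENNReal.ofReal (M * (1 / m - 1 / M)) := by
    apply hypMeasure_le_of_section _
      ((measurableSet_htrans_Utrunc _ _ _).symmDiff (measurableSet_htrans_Utrunc _ _ _))
      m M M hm hmM hM.le
    · rintro ⟨x, y⟩ hp
      rw [Set.mem_symmDiff] at hp
      constructor
      · rcases hp with ⟨h, -⟩ | ⟨h, -⟩
        · exact lt_of_le_of_lt (le_trans (min_le_left _ _) (le_max_right _ _))
            ((hmem ε₁ x₁ (x, y)).mp h).2.1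
        · exact lt_of_le_of_lt (le_trans (min_le_right _ _) (le_max_right _ _))
            ((hmem ε₂ x₁ (x, y)).mp h).2.1
      · by_contra hyM
        push_neg at hyM
        have heps₁ : ε₁ < y := lt_of_le_of_lt (le_max_left _ _) hyM
        have heps₂ : ε₂ < y := lt_of_le_of_lt (le_max_right _ _) hyM
        rcases hp with ⟨h, h'⟩ | ⟨h, h'⟩
        · rcases (hmem ε₁ x₁ (x, y)).mp h with ⟨ha, hb, hc⟩
          rw [max_lt_iff] at hb
          exact h' ((hmem ε₂ x₁ (x, y)).mpr ⟨ha, max_lt hb.1 heps₂, hc⟩)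
        · rcases (hmem ε₂ x₁ (x, y)).mp h with ⟨ha, hb, hc⟩
          rw [max_lt_iff] at hb
          exact h' ((hmem ε₁ x₁ (x, y)).mpr ⟨ha, max_lt hb.1 heps₁, hc⟩)
    · intro y hy
      have hsub : {x : ℝ | (x, y) ∈ symmDiff A C} ⊆ Set.Ioo (x₁ - y / 2) (x₁ + y / 2) := by
        intro x hx
        rw [Set.mem_setOf_eq, Set.mem_symmDiff] at hx
        have habs : 2 * |x - x₁| < y := by
          rcases hx with ⟨h, -⟩ | ⟨h, -⟩
          · exact lt_of_le_of_lt (le_max_left _ _) ((hmem ε₁ x₁ (x, y)).mp h).2.1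
          · exact lt_of_le_of_lt (le_max_left _ _) ((hmem ε₂ x₁ (x, y)).mp h).2.1
        have h2 : |x - x₁| < y / 2 := by linarith
        rw [abs_lt] at h2
        exact ⟨by linarith, by linarith⟩
      calc volume {x : ℝ | (x, y) ∈ symmDiff A C} ≤ volume (Set.Ioo (x₁ - y / 2) (x₁ + y / 2)) :=
            measure_mono hsub
        _ = ENNReal.ofReal y := by rw [Real.volume_Ioo]; ring_nf
        _ ≤ ENNReal.ofReal M := ENNReal.ofReal_le_ofReal hy.2
  -- Bound for C Δ B
  have hCB : hypMeasure (symmDiff C B) ≤ ENNReal.ofReal (2 * t * (1 / ε₂ - 1 / δ)) := by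
    apply hypMeasure_le_of_section _
      ((measurableSet_htrans_Utrunc _ _ _).symmDiff (measurableSet_htrans_Utrunc _ _ _))
      ε₂ δ (2 * t) hε₂ hε₂δ (by positivity)
    · rintro ⟨x, y⟩ hp
      rw [Set.mem_symmDiff] at hp
      rcases hp with ⟨h, -⟩ | ⟨h, -⟩ <;>
        exact ⟨lt_of_le_of_lt (le_max_right _ _) ((hmem ε₂ _ (x, y)).mp h).2.1,
          ((hmem ε₂ _ (x, y)).mp h).2.2⟩
    · intro y hy
      have hsub : {x : ℝ | (x, y) ∈ symmDiff C B} ⊆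
          Set.Icc (min x₁ x₂ - y / 2) (max x₁ x₂ - y / 2) ∪
            Set.Icc (min x₁ x₂ + y / 2) (max x₁ x₂ + y / 2) := by
        intro x hx
        rw [Set.mem_setOf_eq, Set.mem_symmDiff] at hx
        have main : ∀ u v : ℝ, (x, y) ∈ htrans (Utrunc ε₂ δ) u →
            (x, y) ∉ htrans (Utrunc ε₂ δ) v →
            |x - u| < y / 2 ∧ y / 2 ≤ |x - v| := by
          intro u v hu hv
          rcases (hmem ε₂ u (x, y)).mp hu with ⟨-, hb, hc⟩
          rw [max_lt_iff] at hb
          refine ⟨by linarith [hb.1], ?_⟩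
          by_contra hlt
          push_neg at hlt
          apply hv
          rw [hmem]
          exact ⟨by linarith [hy.2, abs_nonneg (x - v)], max_lt (by linarith) hb.2, hc⟩
        rcases hx with ⟨h, h'⟩ | ⟨h, h'⟩
        · obtain ⟨h1, h2⟩ := main x₁ x₂ h h'
          exact mem_twoIcc h1 h2
        · obtain ⟨h1, h2⟩ := main x₂ x₁ h h'
          have := mem_twoIcc h1 h2
          rwa [min_comm x₂ x₁, max_comm x₂ x₁] at this
      calc volume {x : ℝ | (x, y) ∈ symmDiff C B}
          ≤ volume (Set.Icc (min x₁ x₂ - y / 2) (max x₁ x₂ - y / 2) ∪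
              Set.Icc (min x₁ x₂ + y / 2) (max x₁ x₂ + y / 2)) := measure_mono hsub
        _ ≤ volume (Set.Icc (min x₁ x₂ - y / 2) (max x₁ x₂ - y / 2)) +
              volume (Set.Icc (min x₁ x₂ + y / 2) (max x₁ x₂ + y / 2)) := measure_union_le _ _
        _ = ENNReal.ofReal t + ENNReal.ofReal t := by
            rw [Real.volume_Icc, Real.volume_Icc]
            have h1 : max x₁ x₂ - y / 2 - (min x₁ x₂ - y / 2) = |x₂ - x₁| := by
              rw [← max_sub_min_eq_abs]; ring
            have h2 : max x₁ x₂ + y / 2 - (min x₁ x₂ + y / 2) = |x₂ - x₁| := by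
              rw [← max_sub_min_eq_abs]; ring
            rw [h1, h2, htdef, abs_sub_comm]
        _ = ENNReal.ofReal (2 * t) := by
            rw [← ENNReal.ofReal_add ht ht]; ring_nf
  -- Combine
  have htri : symmDiff A B ⊆ symmDiff A C ∪ symmDiff C B := symmDiff_triangle A C B
  have hd : |ε₁ - ε₂| = M - m := by
    rw [hMdef, hmdef, max_sub_min_eq_abs, abs_sub_comm]
  calc hypMeasure (symmDiff A B) ≤ hypMeasure (symmDiff A C ∪ symmDiff C B) :=
        measure_mono htri
    _ ≤ hypMeasure (symmDiff A C) + hypMeasure (symmDiff C B) := measure_union_le _ _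
    _ ≤ ENNReal.ofReal (M * (1 / m - 1 / M)) + ENNReal.ofReal (2 * t * (1 / ε₂ - 1 / δ)) :=
        add_le_add hAC hCB
    _ ≤ ENNReal.ofReal (2 * (t + |ε₁ - ε₂|) / m) := by
        have hnn1 : 0 ≤ M * (1 / m - 1 / M) := by
          have h := one_div_le_one_div_of_le hm hmM
          nlinarith
        have hnn2 : 0 ≤ 2 * t * (1 / ε₂ - 1 / δ) := by
          have h := one_div_le_one_div_of_le hε₂ hε₂δ
          nlinarith
        rw [← ENNReal.ofReal_add hnn1 hnn2]
        apply ENNReal.ofReal_le_ofReal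
        have h1 : M * (1 / m - 1 / M) = (M - m) / m := by
          field_simp
        have h2 : 2 * t * (1 / ε₂ - 1 / δ) ≤ 2 * t / m := by
          have ha : 1 / ε₂ - 1 / δ ≤ 1 / m := by
            have h3 : 1 / ε₂ ≤ 1 / m := one_div_le_one_div_of_le hm (min_le_right _ _)
            have h4 : 0 ≤ 1 / δ := by positivity
            linarith
          calc 2 * t * (1 / ε₂ - 1 / δ) ≤ 2 * t * (1 / m) :=
                mul_le_mul_of_nonneg_left ha (by positivity)
            _ = 2 * t / m := by ring
        rw [hd, h1]
        calc (M - m) / m + 2 * t * (1 / ε₂ - 1 / δ) ≤ (M - m) / m + 2 * t / m := by linarith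
          _ = ((M - m) + 2 * t) / m := by ring
          _ ≤ 2 * (t + (M - m)) / m := by
              gcongr
              linarith
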